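/- Let σ be a B-avoiding permutation of {1,...,n-1}. Then the permutation obtained by increasing every value of σ by 1 and inserting the value 1 immediately after the position of the value 2 is a B-avoiding permutation of {1,...,n}. -/

import Mathlib

/-- `l` is a permutation of `{1, ..., n}`, viewed as the sequence of its values. -/
def IsPermOf (l : List ℕ) (n : ℕ) : Prop := l.Perm (List.range' 1 n)

/-- `l` is B-avoiding: there are no indices `a < b < c < d` with
`max {l a, l c} < min {l b, l d}`. -/
def BAvoid (l : List ℕ) : Prop :=
  ∀ a b c d : Fin l.length, a < b → b < c → c < d →
    ¬ (max (l.get a) (l.get c) < min (l.get b) (l.get d))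

/-- increase all values by 1 and insert `1` immediately before the value `2`. -/
def fBefore (σ : List ℕ) : List ℕ :=
  ((σ.map (· + 1)).take ((σ.map (· + 1)).idxOf 2)) ++
    1 :: ((σ.map (· + 1)).drop ((σ.map (· + 1)).idxOf 2))

/-- increase all values by 1 and insert `1` immediately after the value `2`. -/
def fAfter (σ : List ℕ) : List ℕ :=
  ((σ.map (· + 1)).take ((σ.map (· + 1)).idxOf 2 + 1)) ++
    1 :: ((σ.map (· + 1)).drop ((σ.map (· + 1)).idxOf 2 + 1))

/-- increase all values by 1 and append `1` at the end. -/
def fEnd (σ : List ℕ) : List ℕ := σ.map (· + 1) ++ [1]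

/-- increase all values by 1, replace the value `2` by `1`, and append `2` at the end. -/
def fBump (σ : List ℕ) : List ℕ :=
  (σ.map (· + 1)).map (fun x => if x = 2 then 1 else x) ++ [2]

lemma bavoid_nat {l : List ℕ} (h : BAvoid l) (a b c d : ℕ)
    (ha : a < l.length) (hb : b < l.length) (hc : c < l.length) (hd : d < l.length)
    (hab : a < b) (hbc : b < c) (hcd : c < d) :
    ¬ (max l[a] l[c] < min l[b] l[d]) := by
  have := h ⟨a, ha⟩ ⟨b, hb⟩ ⟨c, hc⟩ ⟨d, hd⟩ hab hbc hcd
  simpa [List.get_eq_getElem] using this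

lemma insert_bavoid (τ : List ℕ) (k : ℕ) (hklt : k < τ.length)
    (hτk : τ[k] = 2) (hτge : ∀ i (h : i < τ.length), 2 ≤ τ[i])
    (hBτ : BAvoid τ) : BAvoid (τ.take (k+1) ++ 1 :: τ.drop (k+1)) := by
  suffices H : ∀ L, L = τ.take (k+1) ++ 1 :: τ.drop (k+1) → BAvoid L by exact H _ rfl
  intro L hL
  have hkp1 : k + 1 ≤ τ.length := hklt
  have htl : (τ.take (k+1)).length = k + 1 := by
    simp only [List.length_take]; omega
  have hLlen : L.length = τ.length + 1 := by
    rw [hL]; simp only [List.length_append, List.length_cons, List.length_take,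
      List.length_drop]; omega
  have hget_lt : ∀ i (h : i < k + 1) (h2 : i < L.length),
      L[i] = τ[i]'(by omega) := by
    intro i h h2
    rw [List.getElem_of_eq hL h2, List.getElem_append_left (by rw [htl]; omega),
      List.getElem_take]
  have hget_eq : ∀ (h2 : k + 1 < L.length), L[k+1] = 1 := by
    intro h2
    rw [List.getElem_of_eq hL h2, List.getElem_append_right (by rw [htl])]
    simp only [htl, Nat.sub_self, List.getElem_cons_zero]
  have hget_gt : ∀ i (h : k + 1 < i) (h2 : i < L.length),
      L[i] = τ[i-1]'(by omega) := by
    intro i h h2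
    rw [List.getElem_of_eq hL h2, List.getElem_append_right (by rw [htl]; omega)]
    have hh : i - (τ.take (k+1)).length = (i - (k+2)) + 1 := by rw [htl]; omega
    simp only [hh, List.getElem_cons_succ, List.getElem_drop]
    congr 1
    omega
  intro a b c d hab hbc hcd hcontra
  simp only [List.get_eq_getElem] at hcontra
  obtain ⟨A, ha⟩ := a
  obtain ⟨B, hb⟩ := b
  obtain ⟨C, hc⟩ := c
  obtain ⟨D, hd⟩ := d
  simp only [Fin.mk_lt_mk] at hab hbc hcd
  simp only at hcontra
  have hval_ge : ∀ i (h : i < L.length), i ≠ k + 1 → 2 ≤ L[i] := by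
    intro i h hip
    rcases lt_or_gt_of_ne hip with h1 | h1
    · rw [hget_lt i h1 h]; exact hτge _ _
    · rw [hget_gt i h1 h]; exact hτge _ _
  by_cases hbp : B = k + 1
  · subst hbp
    have h1 := hget_eq hb
    have h2 := hval_ge A ha (by omega)
    omega
  by_cases hdp : D = k + 1
  · subst hdp
    have h1 := hget_eq hd
    have h2 := hval_ge A ha (by omega)
    omega
  by_cases hcp : C = k + 1
  · subst hcp
    have hva : L[A] = τ[A]'(by omega) := hget_lt A (by omega) ha
    have hvb : L[B] = τ[B]'(by omega) := hget_lt B (by omega) hb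
    have hvc := hget_eq hc
    have hvd : L[D] = τ[D-1]'(by omega) := hget_gt D (by omega) hd
    have hA2 : 2 ≤ τ[A]'(by omega) := hτge A (by omega)
    have hB2 : 2 ≤ τ[B]'(by omega) := hτge B (by omega)
    have hBk : B < k := by
      rcases Nat.lt_or_ge B k with h | h
      · exact h
      · exfalso
        have hBk' : B = k := by omega
        subst hBk'
        have h3 : τ[B]'(by omega) = 2 := hτk
        omega
    exact bavoid_nat hBτ A B k (D-1) (by omega) (by omega) hklt (by omega)
      hab hBk (by omega) (by omega)
  by_cases hap : A = k + 1
  · subst hap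
    have hva := hget_eq ha
    have hvb : L[B] = τ[B-1]'(by omega) := hget_gt B (by omega) hb
    have hvc : L[C] = τ[C-1]'(by omega) := hget_gt C (by omega) hc
    have hvd : L[D] = τ[D-1]'(by omega) := hget_gt D (by omega) hd
    have hC2 : 2 ≤ τ[C-1]'(by omega) := hτge (C-1) (by omega)
    exact bavoid_nat hBτ k (B-1) (C-1) (D-1) hklt (by omega) (by omega) (by omega)
      (by omega) (by omega) (by omega) (by omega)
  · have hval : ∀ i (h : i < L.length), i ≠ k + 1 →
        L[i] = τ[if i < k + 1 then i else i - 1]'(by split <;> omega) := by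
      intro i h hip
      split
      · exact hget_lt i ‹_› h
      · exact hget_gt i (by omega) h
    have hva := hval A ha hap
    have hvb := hval B hb hbp
    have hvc := hval C hc hcp
    have hvd := hval D hd hdp
    exact bavoid_nat hBτ (if A < k + 1 then A else A - 1) (if B < k + 1 then B else B - 1)
      (if C < k + 1 then C else C - 1) (if D < k + 1 then D else D - 1)
      (by split <;> omega) (by split <;> omega) (by split <;> omega) (by split <;> omega)
      (by split <;> split <;> omega) (by split <;> split <;> omega)
      (by split <;> split <;> omega) (by omega)

lemma bavoid_map {σ : List ℕ} (h : BAvoid σ) : BAvoid (σ.map (· + 1)) := by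
  intro a b c d hab hbc hcd
  have ha : (a : ℕ) < σ.length := by have := a.isLt; simpa using this
  have hb : (b : ℕ) < σ.length := by have := b.isLt; simpa using this
  have hc : (c : ℕ) < σ.length := by have := c.isLt; simpa using this
  have hd : (d : ℕ) < σ.length := by have := d.isLt; simpa using this
  have key := bavoid_nat h a b c d ha hb hc hd hab hbc hcd
  simp only [List.get_eq_getElem, List.getElem_map]
  omega

theorem stmt4 (n : ℕ) (hn : 2 ≤ n) (σ : List ℕ)
    (hσ : IsPermOf σ (n - 1)) (hB : BAvoid σ) :
    IsPermOf (fAfter σ) n ∧ BAvoid (fAfter σ) := by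
  have hlen : σ.length = n - 1 := by
    have := hσ.length_eq; simpa using this
  have hτlen : (σ.map (· + 1)).length = σ.length := by simp
  have hmem1 : (1 : ℕ) ∈ σ := by
    have : (1 : ℕ) ∈ List.range' 1 (n - 1) := by
      simp [List.mem_range']; omega
    exact hσ.symm.mem_iff.mp this
  have hmem2 : (2 : ℕ) ∈ σ.map (· + 1) := by
    rw [List.mem_map]; exact ⟨1, hmem1, rfl⟩
  have hσge : ∀ x ∈ σ, 1 ≤ x := by
    intro x hx
    have : x ∈ List.range' 1 (n-1) := hσ.mem_iff.mp hx
    simp [List.mem_range'] at this; omega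
  have hτge : ∀ i (h : i < (σ.map (· + 1)).length), 2 ≤ (σ.map (· + 1))[i] := by
    intro i h
    have h' : i < σ.length := by omega
    have h2 : (σ.map (· + 1))[i] = σ[i] + 1 := by simp
    rw [h2]
    have := hσge σ[i] (List.getElem_mem h')
    omega
  have hklt : (σ.map (· + 1)).idxOf 2 < (σ.map (· + 1)).length :=
    List.idxOf_lt_length_iff.2 hmem2
  have hτk : (σ.map (· + 1))[(σ.map (· + 1)).idxOf 2]'hklt = 2 :=
    List.getElem_idxOf hklt
  have hfa : fAfter σ = (σ.map (· + 1)).take ((σ.map (· + 1)).idxOf 2 + 1) ++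
      1 :: (σ.map (· + 1)).drop ((σ.map (· + 1)).idxOf 2 + 1) := rfl
  constructor
  · -- IsPermOf
    unfold IsPermOf
    have h1 : (fAfter σ).Perm (1 :: σ.map (· + 1)) := by
      rw [hfa]
      have hp := List.perm_middle (a := (1:ℕ))
        (l₁ := (σ.map (· + 1)).take ((σ.map (· + 1)).idxOf 2 + 1))
        (l₂ := (σ.map (· + 1)).drop ((σ.map (· + 1)).idxOf 2 + 1))
      rw [List.take_append_drop] at hp
      exact hp
    have h2 : (1 :: σ.map (· + 1)).Perm (List.range' 1 n) := by
      have hr : List.range' 1 n = 1 :: List.range' 2 (n-1) := by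
        conv_lhs => rw [show n = (n - 1) + 1 by omega]
        rw [List.range'_succ]
      rw [hr]
      refine List.Perm.cons 1 ?_
      have hm : List.range' 2 (n-1) = (List.range' 1 (n-1)).map (· + 1) := by
        rw [show (2:ℕ) = 1 + 1 by rfl, ← List.map_add_range' (a := 1) 1 (n-1)]
        simp [Nat.add_comm]
      rw [hm]
      exact hσ.map _
    exact h1.trans h2
  · rw [hfa]
    exact insert_bavoid (σ.map (· + 1)) ((σ.map (· + 1)).idxOf 2) hklt hτk hτge
      (bavoid_map hB)
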